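/- Let L = F[z]/(f^e) with f monic irreducible of degree d, and let A ∈ L^{n×n} have Smith normal form diag(1,…,1 (r₀ times), f,…,f (r₁ times), …, f^{e−1},…,f^{e−1} (r_{e−1} times), 0,…,0). Then the rank over F of the block matrix φ(A) ∈ F^{den×den} equals d·e·r₀ + d·(e−1)·r₁ + ⋯ + d·r_{e−1}, i.e. rank φ(A) = Σ_{i=0}^{e−1} d(e−i)·r_i. -/

import Mathlib

open Polynomial Matrix

/-- The companion matrix of a monic polynomial `g`, of size `m`. -/
def companionMat {F : Type*} [Field F] (m : ℕ) (g : Polynomial F) :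
    Matrix (Fin m) (Fin m) F :=
  Matrix.of fun i j =>
    if j.val = m - 1 then -g.coeff i.val
    else if i.val = j.val + 1 then 1 else 0

/-- Entrywise extension of `φ : L → F^{m×m}` to `n×n` matrices. -/
def blockMap {F L : Type*} [Field F] [CommRing L] {n m : ℕ}
    (φ : L →+* Matrix (Fin m) (Fin m) F) (A : Matrix (Fin n) (Fin n) L) :
    Matrix (Fin n × Fin m) (Fin n × Fin m) F :=
  Matrix.of fun p q => φ (A p.1 q.1) p.2 q.2

/-- Cumulative sum of multiplicities: `cum r t = r 0 + ⋯ + r (t-1)`. -/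
def cum (r : ℕ → ℕ) (t : ℕ) : ℕ := ∑ i ∈ Finset.range t, r i

/-- The exponent of the `j`-th diagonal entry of the Smith form with
multiplicities `r 0, …, r (e-1)` (value `e` in the zero region). -/
def expOf (r : ℕ → ℕ) (e j : ℕ) : ℕ :=
  ((Finset.Icc 1 e).filter fun t => cum r t ≤ j).card

/-! ### Combinatorial lemmas -/

lemma expOf_le (r : ℕ → ℕ) (e j : ℕ) : expOf r e j ≤ e := by
  have := Finset.card_filter_le (Finset.Icc 1 e) (fun t => cum r t ≤ j)
  simpa [expOf, Nat.card_Icc] using this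

lemma cum_mono (r : ℕ → ℕ) : Monotone (cum r) := by
  intro a b hab
  exact Finset.sum_le_sum_of_subset (Finset.range_subset_range.mpr hab)

lemma comb (r : ℕ → ℕ) (e n : ℕ) (hsum : cum r e ≤ n) :
    ∑ j ∈ Finset.range n, (e - expOf r e j) = ∑ i ∈ Finset.range e, (e - i) * r i := by
  have h1 : ∀ j, e - expOf r e j =
      ((Finset.Icc 1 e).filter fun t => ¬ cum r t ≤ j).card := by
    intro j
    have := Finset.card_filter_add_card_filter_not
      (s := Finset.Icc 1 e) (fun t => cum r t ≤ j)
    rw [Nat.card_Icc] at this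
    unfold expOf
    omega
  calc ∑ j ∈ Finset.range n, (e - expOf r e j)
      = ∑ j ∈ Finset.range n, ∑ t ∈ Finset.Icc 1 e, (if j < cum r t then 1 else 0) := by
        refine Finset.sum_congr rfl fun j _ => ?_
        rw [h1]
        rw [Finset.card_filter (fun t => ¬ cum r t ≤ j)]
        simp [Nat.not_le]
    _ = ∑ t ∈ Finset.Icc 1 e, ∑ j ∈ Finset.range n, (if j < cum r t then 1 else 0) :=
        Finset.sum_comm
    _ = ∑ t ∈ Finset.Icc 1 e, cum r t := by
        refine Finset.sum_congr rfl fun t ht => ?_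
        have hle : cum r t ≤ n := le_trans (cum_mono r (Finset.mem_Icc.mp ht).2) hsum
        rw [← Finset.sum_filter]
        have : (Finset.range n).filter (fun j => j < cum r t) = Finset.range (cum r t) := by
          ext j; simp only [Finset.mem_filter, Finset.mem_range]; omega
        rw [this]; simp
    _ = ∑ t ∈ Finset.Icc 1 e, ∑ i ∈ Finset.range e, (if i < t then r i else 0) := by
        refine Finset.sum_congr rfl fun t ht => ?_
        rw [← Finset.sum_filter]
        have : (Finset.range e).filter (fun i => i < t) = Finset.range t := by
          ext i
          have := (Finset.mem_Icc.mp ht).2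
          simp only [Finset.mem_filter, Finset.mem_range]; omega
        rw [this]; rfl
    _ = ∑ i ∈ Finset.range e, ∑ t ∈ Finset.Icc 1 e, (if i < t then r i else 0) :=
        Finset.sum_comm
    _ = ∑ i ∈ Finset.range e, (e - i) * r i := by
        refine Finset.sum_congr rfl fun i hi => ?_
        rw [← Finset.sum_filter]
        have : (Finset.Icc 1 e).filter (fun t => i < t) = Finset.Icc (i+1) e := by
          ext t; simp only [Finset.mem_filter, Finset.mem_Icc]; omega
        rw [this, Finset.sum_const, Nat.card_Icc, smul_eq_mul]
        congr 1
        omega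

/-! ### Rank of a block diagonal matrix -/

section BlockDiag
variable {F : Type*} [Field F] {m o : Type*} [Fintype m] [Fintype o] [DecidableEq o]

/-- product of submodules inside a pi type, as a linear equiv -/
def piSubEquiv {R : Type*} [Ring R] {φ : o → Type*} [∀ i, AddCommGroup (φ i)]
    [∀ i, Module R (φ i)] (p : ∀ i, Submodule R (φ i)) :
    (∀ i, p i) ≃ₗ[R] (Submodule.pi Set.univ p) where
  toFun x := ⟨fun i => (x i : φ i), fun i _ => (x i).2⟩
  map_add' _ _ := rfl
  map_smul' _ _ := rfl
  invFun y := fun i => ⟨y.1 i, y.2 i trivial⟩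
  left_inv _ := rfl
  right_inv _ := rfl

def curryE : ((m × o) → F) ≃ₗ[F] ∀ _ : o, (m → F) where
  toFun x p j := x (j, p)
  map_add' _ _ := rfl
  map_smul' _ _ := rfl
  invFun y := fun jp => y jp.2 jp.1
  left_inv _ := rfl
  right_inv _ := rfl

lemma rank_blockDiagonal (M : o → Matrix m m F) :
    (Matrix.blockDiagonal M).rank = ∑ i, (M i).rank := by
  classical
  set P : (∀ _ : o, (m → F)) →ₗ[F] (∀ _ : o, (m → F)) :=
    LinearMap.pi (fun p => (M p).mulVecLin ∘ₗ LinearMap.proj p) with hP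
  have key : (Matrix.blockDiagonal M).mulVecLin
      = (curryE.symm.toLinearMap ∘ₗ P ∘ₗ (curryE (m := m) (o := o) (F := F)).toLinearMap) := by
    apply LinearMap.ext; intro x
    funext jp
    obtain ⟨j, p⟩ := jp
    show (Matrix.blockDiagonal M).mulVec x (j, p) = (M p).mulVec (fun i => x (i, p)) j
    simp only [Matrix.mulVec, dotProduct, Fintype.sum_prod_type,
      Matrix.blockDiagonal_apply]
    rw [Finset.sum_comm]
    rw [Finset.sum_eq_single p]
    · simp
    · intro q _ hq
      simp [Ne.symm hq]
    · simp
  have hrange : LinearMap.range P =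
      Submodule.pi Set.univ (fun p => LinearMap.range (M p).mulVecLin) := by
    ext y
    simp only [LinearMap.mem_range, Submodule.mem_pi, Set.mem_univ, forall_true_left]
    constructor
    · rintro ⟨x, rfl⟩ p
      exact ⟨x p, rfl⟩
    · intro h
      choose x hx using h
      exact ⟨x, funext fun p => hx p⟩
  rw [Matrix.rank, key]
  rw [LinearMap.range_comp, LinearMap.range_comp, LinearEquiv.range, Submodule.map_top,
    LinearEquiv.finrank_map_eq, hrange]
  rw [LinearEquiv.finrank_eq (piSubEquiv (fun p => LinearMap.range (M p).mulVecLin)).symm]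
  rw [Module.finrank_pi_fintype]
  rfl
end BlockDiag

/-! ### The companion matrix as multiplication by the root -/

section Companion
variable {F : Type*} [Field F]

/-- basis of `AdjoinRoot g` indexed by `Fin m` -/
noncomputable def adjBasis {g : Polynomial F} (hg : g.Monic) {m : ℕ} (hm : g.natDegree = m) :
    Module.Basis (Fin m) F (AdjoinRoot g) :=
  (AdjoinRoot.powerBasisAux' hg).reindex (finCongr hm)

lemma adjBasis_apply {g : Polynomial F} (hg : g.Monic) {m : ℕ} (hm : g.natDegree = m)
    (j : Fin m) : adjBasis hg hm j = AdjoinRoot.root g ^ (j : ℕ) := by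
  rw [adjBasis, Module.Basis.reindex_apply]
  have h1 : (AdjoinRoot.powerBasis' hg).basis ((finCongr hm).symm j)
      = (AdjoinRoot.powerBasis' hg).gen ^ (((finCongr hm).symm j) : ℕ) :=
    (AdjoinRoot.powerBasis' hg).basis_eq_pow _
  simp only [AdjoinRoot.powerBasis'] at h1
  exact h1

lemma adjBasis_repr {g : Polynomial F} (hg : g.Monic) {m : ℕ} (hm : g.natDegree = m)
    (p : Polynomial F) (i : Fin m) :
    (adjBasis hg hm).repr (AdjoinRoot.mk g p) i = (p %ₘ g).coeff (i : ℕ) := by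
  rw [adjBasis, Module.Basis.repr_reindex]
  rw [Finsupp.mapDomain_equiv_apply]
  rw [AdjoinRoot.powerBasisAux'_repr_apply_to_fun, AdjoinRoot.modByMonicHom_mk]
  rfl

lemma toMatrix_lmul_root {g : Polynomial F} (hg : g.Monic) {m : ℕ} (hm : g.natDegree = m) :
    LinearMap.toMatrixAlgEquiv (adjBasis hg hm)
      ((Algebra.lmul F (AdjoinRoot g)) (AdjoinRoot.root g)) = companionMat m g := by
  ext i j
  have him : (i : ℕ) < m := i.isLt
  have hjm : (j : ℕ) < m := j.isLt
  rw [LinearMap.toMatrixAlgEquiv_apply, adjBasis_apply]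
  have hpow : (Algebra.lmul F (AdjoinRoot g)) (AdjoinRoot.root g) (AdjoinRoot.root g ^ (j : ℕ))
      = AdjoinRoot.mk g (X ^ ((j : ℕ) + 1)) := by
    show AdjoinRoot.root g * AdjoinRoot.root g ^ (j : ℕ) = _
    rw [← pow_succ']
    rw [← AdjoinRoot.mk_X, ← map_pow]
  rw [hpow, adjBasis_repr]
  by_cases hj : (j : ℕ) = m - 1
  · have hj1 : (j : ℕ) + 1 = m := by omega
    have hdeg : (X ^ m - g).degree < g.degree := by
      have h1 : g.degree = (m : WithBot ℕ) := by
        rw [degree_eq_natDegree hg.ne_zero, hm]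
      rw [h1]
      have h2 := degree_sub_lt (p := X ^ m) (q := g) (by rw [degree_X_pow, h1])
        (pow_ne_zero _ X_ne_zero) (by rw [leadingCoeff_X_pow, hg.leadingCoeff])
      rwa [degree_X_pow] at h2
    have hmod : X ^ ((j : ℕ) + 1) %ₘ g = X ^ m - g := by
      rw [hj1]
      have hgg : g %ₘ g = 0 := by
        have := mul_self_modByMonic (p := (1 : Polynomial F)) hg
        rwa [one_mul] at this
      calc X ^ m %ₘ g = (X ^ m - g + g) %ₘ g := by rw [sub_add_cancel]
        _ = (X ^ m - g) %ₘ g + g %ₘ g := add_modByMonic _ _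
        _ = X ^ m - g := by rw [(modByMonic_eq_self_iff hg).mpr hdeg, hgg, add_zero]
    rw [hmod]
    simp only [companionMat, Matrix.of_apply, if_pos hj]
    rw [coeff_sub, coeff_X_pow, if_neg (by omega)]
    ring
  · have hj1 : (j : ℕ) + 1 < m := by omega
    have hmod : X ^ ((j : ℕ) + 1) %ₘ g = X ^ ((j : ℕ) + 1) := by
      rw [modByMonic_eq_self_iff hg, degree_X_pow, degree_eq_natDegree hg.ne_zero, hm]
      exact_mod_cast hj1
    rw [hmod, coeff_X_pow]
    simp only [companionMat, Matrix.of_apply, if_neg hj]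

lemma finrank_range_lmul_mk_pow {f : Polynomial F} (hmonic : f.Monic)
    {e k : ℕ} (hk : k ≤ e) :
    Module.finrank F (LinearMap.range
      ((Algebra.lmul F (AdjoinRoot (f ^ e))) (AdjoinRoot.mk (f ^ e) (f ^ k))))
      = (e - k) * f.natDegree := by
  classical
  set L := AdjoinRoot (f ^ e)
  set t : L := AdjoinRoot.mk (f ^ e) (f ^ k) with ht
  set Φ : Polynomial F →ₗ[F] L := (Polynomial.aeval (AdjoinRoot.root (f ^ e))).toLinearMap with hΦ
  have hΦtop : LinearMap.range Φ = ⊤ := by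
    rw [LinearMap.range_eq_top]
    intro x
    obtain ⟨p, hp⟩ := AdjoinRoot.mk_surjective (g := f ^ e) x
    exact ⟨p, by simpa [Φ, AdjoinRoot.aeval_eq] using hp⟩
  set ψ : Polynomial F →ₗ[F] L := ((Algebra.lmul F L) t) ∘ₗ Φ with hψ
  have hrange : LinearMap.range ((Algebra.lmul F L) t) = LinearMap.range ψ := by
    rw [hψ, LinearMap.range_comp, hΦtop, Submodule.map_top]
  have hfne : f ≠ 0 := hmonic.ne_zero
  have hker : LinearMap.ker ψ = (Ideal.span {f ^ (e - k)}).restrictScalars F := by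
    ext p
    simp only [LinearMap.mem_ker, Submodule.restrictScalars_mem, Ideal.mem_span_singleton]
    have h1 : ψ p = AdjoinRoot.mk (f ^ e) (f ^ k * p) := by
      simp only [ψ, Φ, LinearMap.comp_apply, AlgHom.toLinearMap_apply, AdjoinRoot.aeval_eq]
      rw [Algebra.coe_lmul_eq_mul, LinearMap.mul_apply', ht, ← _root_.map_mul]
    rw [h1, AdjoinRoot.mk_eq_zero]
    constructor
    · intro hdvd
      have h2 : f ^ (e - k) * f ^ k ∣ p * f ^ k := by
        rw [← pow_add, Nat.sub_add_cancel hk, mul_comm p]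
        exact hdvd
      exact (mul_dvd_mul_iff_right (pow_ne_zero k hfne)).mp h2
    · intro hdvd
      have h2 : f ^ e = f ^ k * f ^ (e - k) := by
        rw [← pow_add]
        congr 1
        omega
      rw [h2]
      exact mul_dvd_mul_left _ hdvd
  have e1 : Module.finrank F (LinearMap.range ψ)
      = Module.finrank F (Polynomial F ⧸ LinearMap.ker ψ) :=
    (LinearEquiv.finrank_eq ψ.quotKerEquivRange).symm
  rw [hrange, e1, hker]
  have e2 : (Polynomial F ⧸ (Ideal.span {f ^ (e - k)}).restrictScalars F) ≃ₗ[F]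
      AdjoinRoot (f ^ (e - k)) :=
    Submodule.Quotient.restrictScalarsEquiv F (Ideal.span {f ^ (e - k)})
  rw [LinearEquiv.finrank_eq e2]
  rw [PowerBasis.finrank (AdjoinRoot.powerBasis' (hmonic.pow _))]
  simp [AdjoinRoot.powerBasis', natDegree_pow]

lemma rank_aeval_companionMat {f : Polynomial F} (hmonic : f.Monic)
    {e k m : ℕ} (hk : k ≤ e) (hm : (f ^ e).natDegree = m) :
    (Polynomial.aeval (companionMat m (f ^ e)) (f ^ k)).rank = (e - k) * f.natDegree := by
  classical
  set b := adjBasis (hmonic.pow e) hm with hb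
  have h1 : companionMat m (f ^ e) = LinearMap.toMatrixAlgEquiv b
      ((Algebra.lmul F (AdjoinRoot (f ^ e))) (AdjoinRoot.root (f ^ e))) :=
    (toMatrix_lmul_root _ hm).symm
  rw [h1]
  rw [aeval_algHom_apply (LinearMap.toMatrixAlgEquiv b)]
  rw [aeval_algHom_apply (Algebra.lmul F (AdjoinRoot (f ^ e)))]
  rw [AdjoinRoot.aeval_eq]
  have h2 : (LinearMap.toMatrixAlgEquiv b)
      ((Algebra.lmul F (AdjoinRoot (f ^ e))) (AdjoinRoot.mk (f ^ e) (f ^ k)))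
      = LinearMap.toMatrix b b
      ((Algebra.lmul F (AdjoinRoot (f ^ e))) (AdjoinRoot.mk (f ^ e) (f ^ k))) := rfl
  rw [h2, Matrix.rank_eq_finrank_range_toLin _ b b, Matrix.toLin_toMatrix]
  exact finrank_range_lmul_mk_pow hmonic hk

end Companion

/-! ### blockMap is a ring hom -/

section BlockMap
variable {F L : Type*} [Field F] [CommRing L] {n m : ℕ}
  (φ : L →+* Matrix (Fin m) (Fin m) F)

lemma blockMap_mul (A B : Matrix (Fin n) (Fin n) L) :
    blockMap φ (A * B) = blockMap φ A * blockMap φ B := by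
  ext ⟨p, i⟩ ⟨q, j⟩
  simp only [blockMap, Matrix.of_apply, Matrix.mul_apply, Fintype.sum_prod_type]
  rw [map_sum, Matrix.sum_apply]
  refine Finset.sum_congr rfl fun k _ => ?_
  rw [_root_.map_mul, Matrix.mul_apply]

lemma blockMap_one : blockMap φ (1 : Matrix (Fin n) (Fin n) L) = 1 := by
  ext ⟨p, i⟩ ⟨q, j⟩
  simp only [blockMap, Matrix.of_apply, Matrix.one_apply, apply_ite φ, _root_.map_one,
    _root_.map_zero, Prod.mk.injEq]
  by_cases hpq : p = q
  · simp [hpq, Matrix.one_apply]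
  · simp [hpq]

/-- `blockMap` as a ring hom. -/
def blockMapHom : Matrix (Fin n) (Fin n) L →+* Matrix (Fin n × Fin m) (Fin n × Fin m) F where
  toFun := blockMap φ
  map_one' := blockMap_one φ
  map_mul' := blockMap_mul φ
  map_zero' := by ext ⟨p, i⟩ ⟨q, j⟩; simp [blockMap]
  map_add' := fun A B => by ext ⟨p, i⟩ ⟨q, j⟩; simp [blockMap]

lemma blockMap_diagonal (D : Fin n → L) :
    blockMap φ (Matrix.diagonal D) =
      (Matrix.blockDiagonal fun p => φ (D p)).submatrix
        (Equiv.prodComm (Fin n) (Fin m)) (Equiv.prodComm (Fin n) (Fin m)) := by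
  ext ⟨p, i⟩ ⟨q, j⟩
  simp only [blockMap, Matrix.of_apply, Matrix.submatrix_apply, Equiv.prodComm_apply,
    Prod.swap_prod_mk, Matrix.blockDiagonal_apply, Matrix.diagonal_apply]
  by_cases hpq : p = q
  · simp [hpq]
  · simp [hpq, Ne.symm hpq]

end BlockMap

/-- If `A ∈ L^{n×n}` has Smith form `diag(1 ×r₀, f ×r₁, …, f^{e-1} ×r_{e-1}, 0, …)`,
then `rank φ(A) = Σ_{i<e} d(e-i) rᵢ` over `F`. -/
theorem rank_blockMap_of_smithForm {F : Type*} [Field F] (f : Polynomial F)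
    (hf : Irreducible f) (hmonic : f.Monic) (d e n : ℕ) (hd : d = f.natDegree)
    (he : 1 ≤ e) (C : Matrix (Fin (d * e)) (Fin (d * e)) F)
    (hC : C = companionMat (d * e) (f ^ e))
    (φ : (Polynomial F ⧸ Ideal.span {f ^ e}) →+*
        Matrix (Fin (d * e)) (Fin (d * e)) F)
    (hφ : ∀ g : Polynomial F, φ (Ideal.Quotient.mk (Ideal.span {f ^ e}) g) =
        Polynomial.aeval C g)
    (A : Matrix (Fin n) (Fin n) (Polynomial F ⧸ Ideal.span {f ^ e}))
    (r : ℕ → ℕ) (hsum : ∑ i ∈ Finset.range e, r i ≤ n)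
    (U V : Matrix (Fin n) (Fin n) (Polynomial F ⧸ Ideal.span {f ^ e}))
    (hU : IsUnit U) (hV : IsUnit V)
    (hSmith : U * A * V = Matrix.diagonal fun j : Fin n =>
        (Ideal.Quotient.mk (Ideal.span {f ^ e}) f) ^ (expOf r e j.val)) :
    (blockMap φ A).rank = ∑ i ∈ Finset.range e, d * (e - i) * r i := by
  classical
  have hmm : (f ^ e).natDegree = d * e := by
    rw [natDegree_pow, hd, mul_comm]
  have hUdet : IsUnit (blockMap φ U).det :=
    (Matrix.isUnit_iff_isUnit_det _).mp ((blockMapHom φ).isUnit_map hU)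
  have hVdet : IsUnit (blockMap φ V).det :=
    (Matrix.isUnit_iff_isUnit_det _).mp ((blockMapHom φ).isUnit_map hV)
  have key : (blockMap φ (U * A * V)).rank = (blockMap φ A).rank := by
    rw [blockMap_mul, blockMap_mul]
    rw [Matrix.rank_mul_eq_left_of_isUnit_det _ _ hVdet]
    rw [Matrix.rank_mul_eq_right_of_isUnit_det _ _ hUdet]
  rw [← key, hSmith, blockMap_diagonal, Matrix.rank_submatrix, rank_blockDiagonal]
  have hterm : ∀ p : Fin n,
      (φ ((Ideal.Quotient.mk (Ideal.span {f ^ e}) f) ^ expOf r e (p : ℕ))).rank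
      = d * (e - expOf r e (p : ℕ)) := by
    intro p
    rw [← map_pow, hφ, hC]
    rw [rank_aeval_companionMat hmonic (expOf_le r e (p : ℕ)) hmm]
    rw [hd, mul_comm]
  rw [Finset.sum_congr rfl (fun p _ => hterm p)]
  rw [Fin.sum_univ_eq_sum_range (fun j => d * (e - expOf r e j)) n]
  rw [← Finset.mul_sum, comb r e n hsum, Finset.mul_sum]
  exact Finset.sum_congr rfl fun i _ => (mul_assoc _ _ _).symm
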